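/- Let k be a field, Π a presentation on a set E over k, F a finite subset of E, and P a subset of E disjoint from F. Then there is a Π-independent subset P' of P such that (Π / P)↾F = (Π / P')↾F. -/

import Mathlib

open Function Set

noncomputable section

variable {α k : Type*} [Field k]

/-- Axiom (O2) for a pair of families of subsets of the ground set `E`. -/
def AxO2 (E : Set α) (𝒞 𝒟 : Set (Set α)) : Prop :=
  ∀ P Q : Set α, ∀ e : α, Disjoint P Q → e ∉ P → e ∉ Q → P ∪ Q ∪ {e} = E →
    (∃ C ∈ 𝒞, e ∈ C ∧ C ⊆ P ∪ {e}) ∨ (∃ D ∈ 𝒟, e ∈ D ∧ D ⊆ Q ∪ {e})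

/-- Two vectors are orthogonal: supports intersect finitely and the sum of products is zero. -/
def Orthog (v w : α → k) : Prop :=
  (support v ∩ support w).Finite ∧ ∑ᶠ e, v e * w e = 0

/-- The subspace of `k^α` of functions supported in `E` (the formal meaning of `k^E`). -/
def FunOn (E : Set α) : Submodule k (α → k) where
  carrier := {v | support v ⊆ E}
  add_mem' hf hg := (support_add _ _).trans (union_subset hf hg)
  zero_mem' := by simp
  smul_mem' c f hf := (support_const_smul_subset c f).trans hf

/-- The set `S(V)` of supports of elements of `V`. -/
def suppSet (V : Submodule k (α → k)) : Set (Set α) := support '' (V : Set (α → k))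

/-- A presentation on the ground set `E` over `k`: a pair of orthogonal subspaces of `k^E`
whose families of supports satisfy (O2). -/
def IsPresentationOn (E : Set α) (V W : Submodule k (α → k)) : Prop :=
  V ≤ FunOn E ∧ W ≤ FunOn E ∧ (∀ v ∈ V, ∀ w ∈ W, Orthog v w) ∧
    AxO2 E (suppSet V) (suppSet W)

/-- Minimal nonempty elements of a family of sets. -/
def MinNE (𝒜 : Set (Set α)) (o : Set α) : Prop :=
  o ∈ 𝒜 ∧ o.Nonempty ∧ ∀ o' ∈ 𝒜, o'.Nonempty → o' ⊆ o → o' = o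

/-- A circuit of a matroid: a minimal dependent set. -/
def MatCircuit (M : Matroid α) (C : Set α) : Prop := Minimal M.Dep C

/-- The pair `(V, W)` presents the matroid `M` on ground set `E`. -/
def Presents (E : Set α) (V W : Submodule k (α → k)) (M : Matroid α) : Prop :=
  M.E = E ∧ (∀ C, MatCircuit M C ↔ MinNE (suppSet V) C) ∧
    (∀ D, MatCircuit M✶ D ↔ MinNE (suppSet W) D)

/-- Restriction of a vector to `X`, as a linear endomap of `k^α` (zeroing outside `X`). -/
def indLM (X : Set α) : (α → k) →ₗ[k] (α → k) where
  toFun v := X.indicator v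
  map_add' f g := by
    funext a
    by_cases h : a ∈ X <;> simp [Set.indicator_of_mem, Set.indicator_of_notMem, h]
  map_smul' c f := by
    funext a
    by_cases h : a ∈ X <;> simp [Set.indicator_of_mem, Set.indicator_of_notMem, h]

/-- Contraction `V.X` of a subspace to `X`. -/
def conV (V : Submodule k (α → k)) (X : Set α) : Submodule k (α → k) :=
  Submodule.map (indLM X) V

/-- Restriction of a pair `(V,W)` to the ground set `X`: `(V↾X, W.X)`. -/
def pairRes (Pr : Submodule k (α → k) × Submodule k (α → k)) (X : Set α) :
    Submodule k (α → k) × Submodule k (α → k) :=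
  (Pr.1 ⊓ FunOn X, conV Pr.2 X)

/-- Contraction of a pair `(V,W)` to the ground set `X`: `(V.X, W↾X)`. -/
def pairCon (Pr : Submodule k (α → k) × Submodule k (α → k)) (X : Set α) :
    Submodule k (α → k) × Submodule k (α → k) :=
  (conV Pr.1 X, Pr.2 ⊓ FunOn X)

/-- A set `I` is `Π`-independent (w.r.t. the vector subspace `V`): it includes no
nonempty support of a vector. -/
def PresIndep (V : Submodule k (α → k)) (I : Set α) : Prop :=
  ∀ v ∈ V, support v ⊆ I → v = 0

end

noncomputable section Statement13

namespace St13

open Function Set Module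

variable {α k : Type*} [Field k]

/-- The finitary pairing on `k^α`. -/
def Phi (a b : α → k) : k := ∑ᶠ e, a e * b e

/-- The space `A(X)` of `F`-shadows of vectors of `V` supported in `F ∪ X`. -/
def AXm (V : Submodule k (α → k)) (F X : Set α) : Submodule k (α → k) :=
  conV (V ⊓ FunOn (F ∪ X)) F

/-- The space `B(X)` of `F`-shadows of vectors of `W` supported in `E \ X`. -/
def BXm (W : Submodule k (α → k)) (E F X : Set α) : Submodule k (α → k) :=
  conV (W ⊓ FunOn (E \ X)) F

lemma mem_funOn {v : α → k} {X : Set α} : v ∈ FunOn (k := k) X ↔ support v ⊆ X := Iff.rfl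

lemma indLM_apply (X : Set α) (v : α → k) : indLM (k := k) X v = X.indicator v := rfl

lemma mem_AXm {V : Submodule k (α → k)} {F X : Set α} {x : α → k} :
    x ∈ AXm V F X ↔ ∃ v, v ∈ V ∧ support v ⊆ F ∪ X ∧ F.indicator v = x := by
  constructor
  · rintro ⟨v, hv, rfl⟩
    exact ⟨v, hv.1, hv.2, rfl⟩
  · rintro ⟨v, hv1, hv2, rfl⟩
    exact ⟨v, ⟨hv1, hv2⟩, rfl⟩

lemma mem_BXm {W : Submodule k (α → k)} {E F X : Set α} {x : α → k} :
    x ∈ BXm W E F X ↔ ∃ w, w ∈ W ∧ support w ⊆ E \ X ∧ F.indicator w = x := by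
  constructor
  · rintro ⟨w, hw, rfl⟩
    exact ⟨w, hw.1, hw.2, rfl⟩
  · rintro ⟨w, hw1, hw2, rfl⟩
    exact ⟨w, ⟨hw1, hw2⟩, rfl⟩

lemma support_indicator_sub (F : Set α) (v : α → k) :
    support (F.indicator v) ⊆ F := by
  intro x hx
  by_contra hxF
  exact hx (indicator_of_notMem hxF v)

lemma AXm_le_funOn {V : Submodule k (α → k)} {F X : Set α} :
    AXm V F X ≤ FunOn F := by
  rintro x hx
  obtain ⟨v, -, -, rfl⟩ := mem_AXm.1 hx
  exact support_indicator_sub F v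

lemma BXm_le_funOn {W : Submodule k (α → k)} {E F X : Set α} :
    BXm W E F X ≤ FunOn F := by
  rintro x hx
  obtain ⟨w, -, -, rfl⟩ := mem_BXm.1 hx
  exact support_indicator_sub F w

lemma AXm_mono {V : Submodule k (α → k)} {F X Y : Set α} (hXY : X ⊆ Y) :
    AXm V F X ≤ AXm V F Y := by
  intro x hx
  obtain ⟨v, h1, h2, rfl⟩ := mem_AXm.1 hx
  exact mem_AXm.2 ⟨v, h1, h2.trans (union_subset_union_right F hXY), rfl⟩

lemma BXm_antimono {W : Submodule k (α → k)} {E F X Y : Set α} (hXY : X ⊆ Y) :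
    BXm W E F Y ≤ BXm W E F X := by
  intro x hx
  obtain ⟨w, h1, h2, rfl⟩ := mem_BXm.1 hx
  exact mem_BXm.2 ⟨w, h1, h2.trans (diff_subset_diff_right hXY), rfl⟩

/-- Core orthogonality computation. -/
lemma phi_eq_zero {F : Set α} {v w : α → k} (ho : Orthog v w)
    (hsub : support v ∩ support w ⊆ F) :
    Phi (F.indicator v) (F.indicator w) = 0 := by
  have hfun : (fun e => F.indicator v e * F.indicator w e) = fun e => v e * w e := by
    funext e
    by_cases hF : e ∈ F
    · rw [indicator_of_mem hF, indicator_of_mem hF]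
    · rw [indicator_of_notMem hF, zero_mul]
      by_cases hv : v e = 0
      · rw [hv, zero_mul]
      · by_cases hw : w e = 0
        · rw [hw, mul_zero]
        · exact absurd (hsub ⟨hv, hw⟩) hF
  rw [Phi, hfun]
  exact ho.2

/-- `A(X) ⊥ B(X)`. -/
lemma phi_AB_zero {E F : Set α} {V W : Submodule k (α → k)}
    (h : IsPresentationOn E V W) {X : Set α} {a b : α → k}
    (ha : a ∈ AXm V F X) (hb : b ∈ BXm W E F X) : Phi a b = 0 := by
  obtain ⟨v, hv, hvs, rfl⟩ := mem_AXm.1 ha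
  obtain ⟨w, hw, hws, rfl⟩ := mem_BXm.1 hb
  apply phi_eq_zero (h.2.2.1 v hv w hw)
  rintro x ⟨hx1, hx2⟩
  rcases hvs hx1 with h' | h'
  · exact h'
  · exact absurd h' (hws hx2).2

/-- The (O2)-instance used for the complement lemma. -/
lemma o2_step {E F : Set α} {V W : Submodule k (α → k)}
    (h : IsPresentationOn E V W) (hF : F ⊆ E) {X : Set α} (hX : X ⊆ E)
    (hXF : Disjoint F X) {e : α} (he : e ∈ F) {F1 : Set α} (hF1 : F1 ⊆ F) (heF1 : e ∉ F1) :
    (∃ a ∈ AXm V F X, a e ≠ 0 ∧ ∀ i, a i ≠ 0 → i ∈ F1 ∨ i = e) ∨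
    (∃ b ∈ BXm W E F X, b e ≠ 0 ∧ ∀ t ∈ F1, b t = 0) := by
  have heX : e ∉ X := fun hmem => (hXF.le_bot ⟨he, hmem⟩)
  obtain h1 | h2 := h.2.2.2 (F1 ∪ X) (E \ (F1 ∪ X ∪ {e})) e
    (by
      rw [Set.disjoint_left]
      rintro x hx ⟨-, hx2⟩
      exact hx2 (Or.inl hx))
    (by rintro (h' | h') <;> [exact heF1 h'; exact heX h'])
    (by rintro ⟨-, h'⟩; exact h' (Or.inr rfl))
    (by
      apply Set.eq_of_subset_of_subset
      · rintro x ((h' | h') | h')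
        · rcases h' with h' | h'
          · exact hF (hF1 h')
          · exact hX h'
        · exact h'.1
        · rw [mem_singleton_iff] at h'; exact h' ▸ hF he
      · intro x hxE
        by_cases h1 : x ∈ F1
        · exact Or.inl (Or.inl (Or.inl h1))
        by_cases h2 : x ∈ X
        · exact Or.inl (Or.inl (Or.inr h2))
        by_cases h3 : x = e
        · exact Or.inr h3
        · exact Or.inl (Or.inr ⟨hxE, by
            rintro ((h' | h') | h') <;> [exact h1 h'; exact h2 h'; exact h3 h']⟩))
  · obtain ⟨C, hC, heC, hCsub⟩ := h1
    obtain ⟨v, hvV, rfl⟩ := hC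
    refine Or.inl ⟨F.indicator v, mem_AXm.2 ⟨v, hvV, ?_, rfl⟩, ?_, ?_⟩
    · intro x hx
      rcases hCsub hx with (h' | h') | h'
      · exact Or.inl (hF1 h')
      · exact Or.inr h'
      · rw [mem_singleton_iff] at h'; exact Or.inl (h' ▸ he)
    · rw [indicator_of_mem he]; exact heC
    · intro i hi
      have hiF : i ∈ F := by
        by_contra hiF
        exact hi (indicator_of_notMem hiF v)
      rw [indicator_of_mem hiF] at hi
      rcases hCsub hi with (h' | h') | h'
      · exact Or.inl h'
      · exact absurd h' fun hmem => hXF.le_bot ⟨hiF, hmem⟩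
      · exact Or.inr h'
  · obtain ⟨D, hD, heD, hDsub⟩ := h2
    obtain ⟨w, hwW, rfl⟩ := hD
    refine Or.inr ⟨F.indicator w, mem_BXm.2 ⟨w, hwW, ?_, rfl⟩, ?_, ?_⟩
    · intro x hx
      rcases hDsub hx with h' | h'
      · exact ⟨h'.1, fun hmem => h'.2 (Or.inl (Or.inr hmem))⟩
      · rw [mem_singleton_iff] at h'
        exact ⟨h' ▸ hF he, h' ▸ heX⟩
    · rw [indicator_of_mem he]; exact heD
    · intro t ht
      by_cases htF : t ∈ F
      · rw [indicator_of_mem htF]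
        by_contra hwt
        rcases hDsub hwt with h' | h'
        · exact h'.2 (Or.inl (Or.inl ht))
        · rw [mem_singleton_iff] at h'; exact heF1 (h' ▸ ht)
      · exact indicator_of_notMem htF w

section Claim2

variable (k : Type*) [Field k] (ι : Type*) [Fintype ι]

/-- The standard dot-product bilinear form on `ι → k`. -/
def dotB : LinearMap.BilinForm k (ι → k) :=
  LinearMap.mk₂ k (fun u v => ∑ i, u i * v i)
    (fun x y z => by simp [add_mul, Finset.sum_add_distrib])
    (fun c x y => by simp [Finset.mul_sum, mul_assoc])
    (fun x y z => by simp [mul_add, Finset.sum_add_distrib])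
    (fun c x y => by simp [Finset.mul_sum, mul_left_comm])

lemma dotB_apply (u v : ι → k) : dotB k ι u v = ∑ i, u i * v i := rfl

lemma dotB_comm (u v : ι → k) : dotB k ι u v = dotB k ι v u :=
  Finset.sum_congr rfl fun i _ => mul_comm _ _

lemma dotB_refl : (dotB k ι).IsRefl := fun x y h => by
  rw [dotB_comm]; exact h

lemma dotB_nondegen : (dotB k ι).Nondegenerate := by
  classical
  refine (LinearMap.IsRefl.nondegenerate_iff_separatingLeft (dotB_refl k ι)).2 ?_
  intro m hm
  funext i
  have h := hm (Pi.single i 1)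
  rw [dotB_apply] at h
  simpa [Pi.single_apply, mul_ite, Finset.sum_ite_eq'] using h

variable {k ι}

/-- A family of vectors of `U` with pairwise distinct "pivots" within the coordinate
set `p` gives a rank lower bound. -/
lemma card_le_finrank (U : Submodule k (ι → k)) (p : ι → Prop) [Fintype {e // p e}]
    (u : {e // p e} → (ι → k)) (hu : ∀ e, u e ∈ U) (hne : ∀ e, u e e ≠ 0)
    (hsupp : ∀ e i, p i → u e i ≠ 0 → i = (e : ι)) :
    Fintype.card {e // p e} ≤ finrank k U := by
  classical
  let L : U →ₗ[k] ({e // p e} → k) :=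
    (LinearMap.funLeft k k (Subtype.val)).comp U.subtype
  have hsurj : Function.Surjective L := by
    intro y
    refine ⟨∑ e : {e // p e}, (y e / u e e) • (⟨u e, hu e⟩ : U), ?_⟩
    funext e₀
    have hLcoe : ∀ (x : U), L x e₀ = (x : ι → k) (e₀ : ι) := fun x => rfl
    rw [hLcoe]
    rw [Submodule.coe_sum]
    have : ∀ e : {e // p e},
        ((((y e / u e e) • (⟨u e, hu e⟩ : U)) : U) : ι → k) ((e₀ : ι))
          = (y e / u e e) * u e e₀ := fun e => rfl
    rw [Finset.sum_apply]
    rw [Finset.sum_congr rfl fun e _ => this e]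
    rw [Finset.sum_eq_single e₀]
    · rw [div_mul_cancel₀ _ (hne e₀)]
    · intro e _ hee₀
      have : u e e₀ = 0 := by
        by_contra hne'
        exact hee₀ (Subtype.ext (hsupp e e₀ e₀.2 hne')).symm
      rw [this, mul_zero]
    · intro h; exact absurd (Finset.mem_univ e₀) h
  have h1 : Fintype.card {e // p e} = finrank k ({e // p e} → k) :=
    (Module.finrank_pi k).symm
  have h2 : finrank k ({e // p e} → k) = finrank k (LinearMap.range L) := by
    rw [LinearMap.range_eq_top.2 hsurj]
    exact (finrank_top k _).symm
  rw [h1, h2]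
  exact LinearMap.finrank_range_le L

/-- The complement lemma in finite dimensions. -/
theorem claim2 (U Wsp : Submodule k (ι → k))
    (horth : ∀ u ∈ U, ∀ w ∈ Wsp, dotB k ι u w = 0)
    (hdich : ∀ (e : ι) (T : Set ι), e ∉ T →
      (∃ u ∈ U, u e ≠ 0 ∧ ∀ i, u i ≠ 0 → i ∈ T ∨ i = e) ∨
      (∃ w ∈ Wsp, w e ≠ 0 ∧ ∀ t ∈ T, w t = 0)) :
    Wsp = (dotB k ι).orthogonal U ∧ U = (dotB k ι).orthogonal Wsp := by
  classical
  -- a maximal coordinate set S on which U has no support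
  obtain ⟨S, hSpred, hSmax⟩ : ∃ S : Finset ι,
      (∀ x ∈ U, (∀ i, x i ≠ 0 → i ∈ S) → x = 0) ∧
      ∀ T : Finset ι, (∀ x ∈ U, (∀ i, x i ≠ 0 → i ∈ T) → x = 0) → T.card ≤ S.card := by
    obtain ⟨S, hS, hmax⟩ := Finset.exists_max_image
      (Finset.univ.filter fun T : Finset ι => ∀ x ∈ U, (∀ i, x i ≠ 0 → i ∈ T) → x = 0)
      Finset.card
      ⟨∅, by
        simp only [Finset.mem_filter, Finset.mem_univ, true_and]
        intro x _ h0
        funext i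
        by_contra hi
        exact absurd (h0 i hi) (by simp)⟩
    rw [Finset.mem_filter] at hS
    refine ⟨S, hS.2, fun T hT => hmax T ?_⟩
    rw [Finset.mem_filter]
    exact ⟨Finset.mem_univ T, hT⟩
  -- pivots outside S for U
  have hU : ∀ e, e ∉ S → ∃ u ∈ U, u e ≠ 0 ∧ ∀ i, u i ≠ 0 → i ∈ S ∨ i = e := by
    intro e he
    by_contra hcon
    push_neg at hcon
    have hpred : ∀ x ∈ U, (∀ i, x i ≠ 0 → i ∈ insert e S) → x = 0 := by
      intro x hx hsupp
      by_cases hxe : x e = 0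
      · refine hSpred x hx fun i hi => ?_
        rcases Finset.mem_insert.1 (hsupp i hi) with h' | h'
        · exact absurd (h' ▸ hi) (fun hh => hh hxe)
        · exact h'
      · obtain ⟨i, hi1, hi2, hi3⟩ := hcon x hx hxe
        exfalso
        rcases Finset.mem_insert.1 (hsupp i hi1) with h' | h'
        · exact hi3 h'
        · exact hi2 h' 
    have := hSmax _ hpred
    rw [Finset.card_insert_of_notMem he] at this
    omega
  -- pivots inside S for W
  have hW : ∀ e, e ∈ S → ∃ w ∈ Wsp, w e ≠ 0 ∧ ∀ i, i ∈ S → i ≠ e → w i = 0 := by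
    intro e he
    rcases hdich e (↑(S.erase e)) (by simp) with ⟨u, huU, hue, husupp⟩ | ⟨w, hw, hwe, hwt⟩
    · exfalso
      have hu0 : u = 0 := by
        refine hSpred u huU fun i hi => ?_
        rcases husupp i hi with h' | h'
        · exact Finset.mem_of_mem_erase h'
        · exact h' ▸ he
      rw [hu0] at hue
      exact hue rfl
    · refine ⟨w, hw, hwe, fun i hiS hine => hwt i ?_⟩
      exact Finset.mem_coe.2 (Finset.mem_erase.2 ⟨hine, hiS⟩)
  -- rank bounds
  have hrankU : Fintype.card ι - S.card ≤ finrank k U := by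
    choose uf hufU hufne hufsupp using hU
    have := card_le_finrank U (fun e => e ∉ S)
      (fun e => uf e e.2) (fun e => hufU e e.2) (fun e => hufne e e.2)
      (fun e i hip hine => by
        rcases hufsupp (e : ι) e.2 i hine with h' | h'
        · exact absurd h' hip
        · exact h')
    calc Fintype.card ι - S.card
        = Fintype.card {e : ι // e ∉ S} := by
          rw [Fintype.card_subtype_compl (fun e : ι => e ∈ S)]
          congr 1
          exact (Fintype.card_coe S).symm
      _ ≤ finrank k U := this
  have hrankW : S.card ≤ finrank k Wsp := by
    choose wf hwfW hwfne hwfsupp using hW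
    have := card_le_finrank Wsp (fun e => e ∈ S)
      (fun e => wf e e.2) (fun e => hwfW e e.2) (fun e => hwfne e e.2)
      (fun e i hip hine => by
        by_contra hie
        exact hine (hwfsupp (e : ι) e.2 i hip hie))
    have hcc : Fintype.card {e // (fun e => e ∈ S) e} = S.card :=
      Fintype.card_of_subtype S (fun x => Iff.rfl)
    rwa [hcc] at this
  have hcard : S.card ≤ Fintype.card ι := Finset.card_le_univ S
  have hsum : Fintype.card ι ≤ finrank k U + finrank k Wsp := by omega
  -- orthogonality inclusions
  have hWle : Wsp ≤ (dotB k ι).orthogonal U := by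
    intro w hw
    rw [LinearMap.BilinForm.mem_orthogonal_iff]
    intro u hu
    exact horth u hu w hw
  have hUle : U ≤ (dotB k ι).orthogonal Wsp := by
    intro u hu
    rw [LinearMap.BilinForm.mem_orthogonal_iff]
    intro w hw
    rw [dotB_comm]
    exact horth u hu w hw
  have hoU : finrank k ((dotB k ι).orthogonal U) = Fintype.card ι - finrank k U := by
    rw [LinearMap.BilinForm.finrank_orthogonal (dotB_nondegen k ι) U]
    rw [Module.finrank_pi k]
  have hoW : finrank k ((dotB k ι).orthogonal Wsp) = Fintype.card ι - finrank k Wsp := by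
    rw [LinearMap.BilinForm.finrank_orthogonal (dotB_nondegen k ι) Wsp]
    rw [Module.finrank_pi k]
  have hfrU : finrank k U ≤ Fintype.card ι := by
    have := Submodule.finrank_le U
    rwa [Module.finrank_pi k] at this
  have hfrW : finrank k Wsp ≤ Fintype.card ι := by
    have := Submodule.finrank_le Wsp
    rwa [Module.finrank_pi k] at this
  constructor
  · exact Submodule.eq_of_le_of_finrank_le hWle (by omega)
  · exact Submodule.eq_of_le_of_finrank_le hUle (by omega)

end Claim2

section Duality

variable {α k : Type*} [Field k] {E F : Set α} {V W : Submodule k (α → k)}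

/-- The finite-dimensional complement lemma, transported to `A(X)`, `B(X)`. -/
lemma duality (h : IsPresentationOn E V W) (hF : F ⊆ E) (hFfin : F.Finite)
    {X : Set α} (hX : X ⊆ E) (hXF : Disjoint F X) :
    (∀ b, Function.support b ⊆ F → (∀ a ∈ AXm V F X, Phi a b = 0) → b ∈ BXm W E F X) ∧
    (∀ a, Function.support a ⊆ F → (∀ b ∈ BXm W E F X, Phi a b = 0) → a ∈ AXm V F X) := by
  classical
  haveI : Fintype ↥F := hFfin.fintype
  set res : (α → k) →ₗ[k] (↥F → k) := LinearMap.funLeft k k (Subtype.val) with hres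
  have hPhi : ∀ a b : α → k, (∀ e, a e * b e ≠ 0 → e ∈ F) →
      Phi a b = dotB k ↥F (res a) (res b) := by
    intro a b hab
    rw [dotB_apply, Phi]
    have hsupp : Function.support (fun e => a e * b e) ⊆ ↑hFfin.toFinset := by
      intro e he
      simpa only [Finset.mem_coe, Set.Finite.mem_toFinset] using hab e he
    rw [finsum_eq_sum_of_support_subset _ hsupp]
    exact Finset.sum_subtype _ (fun x => hFfin.mem_toFinset) _
  have hinj : ∀ a b : α → k, Function.support a ⊆ F → Function.support b ⊆ F → res a = res b → a = b := by
    intro a b ha hb hab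
    funext x
    by_cases hx : x ∈ F
    · exact congrFun hab ⟨x, hx⟩
    · rw [notMem_support.1 (fun hs => hx (ha hs)), notMem_support.1 (fun hs => hx (hb hs))]
  set UU := (AXm V F X).map res with hUU
  set WW := (BXm W E F X).map res with hWW
  have hprodF : ∀ a b : α → k, Function.support a ⊆ F → (∀ e, a e * b e ≠ 0 → e ∈ F) := by
    intro a b ha e he
    by_contra heF
    have h0 : a e = 0 := notMem_support.1 fun hs => heF (ha hs)
    rw [h0, zero_mul] at he
    exact he rfl
  have horth : ∀ u ∈ UU, ∀ w ∈ WW, dotB k ↥F u w = 0 := by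
    rintro u ⟨a, ha, rfl⟩ w ⟨b, hb, rfl⟩
    rw [← hPhi a b (hprodF a b (AXm_le_funOn ha))]
    exact phi_AB_zero h ha hb
  have hdich : ∀ (e : ↥F) (T : Set ↥F), e ∉ T →
      (∃ u ∈ UU, u e ≠ 0 ∧ ∀ i, u i ≠ 0 → i ∈ T ∨ i = e) ∨
      (∃ w ∈ WW, w e ≠ 0 ∧ ∀ t ∈ T, w t = 0) := by
    intro e T heT
    have hsub : (Subtype.val '' T) ⊆ F := by rintro x ⟨y, -, rfl⟩; exact y.2
    have hne : (e : α) ∉ Subtype.val '' T := by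
      rintro ⟨y, hy, hxy⟩
      exact heT ((Subtype.ext hxy) ▸ hy)
    rcases o2_step h hF hX hXF e.2 hsub hne with ⟨a, ha, hae, hasupp⟩ | ⟨b, hb, hbe, hbt⟩
    · refine Or.inl ⟨res a, ⟨a, ha, rfl⟩, hae, ?_⟩
      intro i hi
      rcases hasupp (i : α) hi with h' | h'
      · obtain ⟨y, hy, hxy⟩ := h'
        exact Or.inl ((Subtype.ext hxy : y = i) ▸ hy)
      · exact Or.inr (Subtype.ext h')
    · refine Or.inr ⟨res b, ⟨b, hb, rfl⟩, hbe, ?_⟩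
      intro t ht
      exact hbt (t : α) ⟨t, ht, rfl⟩
  obtain ⟨hW2, hU2⟩ := claim2 UU WW horth hdich
  constructor
  · intro b hbF hb0
    have hmem : res b ∈ (dotB k ↥F).orthogonal UU := by
      rw [LinearMap.BilinForm.mem_orthogonal_iff]
      rintro u ⟨a, ha, rfl⟩
      rw [← hPhi a b (hprodF a b (AXm_le_funOn ha))]
      exact hb0 a ha
    rw [← hW2] at hmem
    obtain ⟨b₀, hb₀, hb₀eq⟩ := hmem
    rwa [← hinj b₀ b (BXm_le_funOn hb₀) hbF hb₀eq]
  · intro a haF ha0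
    have hmem : res a ∈ (dotB k ↥F).orthogonal WW := by
      rw [LinearMap.BilinForm.mem_orthogonal_iff]
      rintro w ⟨b, hb, rfl⟩
      rw [dotB_comm,
        ← hPhi a b (hprodF a b haF)]
      exact ha0 b hb
    rw [← hU2] at hmem
    obtain ⟨a₀, ha₀, ha₀eq⟩ := hmem
    rwa [← hinj a₀ a (AXm_le_funOn ha₀) haF ha₀eq]

end Duality

section Main

variable {α k : Type*} [Field k] {E F P : Set α} {V W : Submodule k (α → k)}

lemma support_sub_subset (v u : α → k) :
    Function.support (v - u) ⊆ Function.support v ∪ Function.support u := by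
  intro x hx
  by_contra hmem
  rw [mem_union] at hmem
  push_neg at hmem
  apply hx
  show v x - u x = 0
  rw [notMem_support.1 hmem.1, notMem_support.1 hmem.2, sub_zero]

lemma main_lemma (h : IsPresentationOn E V W) (hF : F ⊆ E) (hFfin : F.Finite)
    (hP : P ⊆ E) (hFP : Disjoint F P) :
    ∃ P', P' ⊆ P ∧ PresIndep V P' ∧ AXm V F P' = AXm V F P ∧
      BXm W E F P' = BXm W E F P := by
  classical
  set Scal : Set (Set α) := {S | S ⊆ P ∧ ∃ vs : Finset (α → k),
      (∀ v ∈ vs, v ∈ V ∧ Function.support v ⊆ F ∪ P) ∧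
      S = (⋃ v ∈ vs, Function.support v) \ F ∧
      AXm V F P ≤ Submodule.span k ((fun v => F.indicator v) '' ↑vs)} with hScal
  -- members dominate A(P)
  have hAle : ∀ S ∈ Scal, AXm V F P ≤ AXm V F S := by
    rintro S ⟨hSP, vs, hvs, hSeq, hspan⟩
    refine hspan.trans (Submodule.span_le.2 ?_)
    rintro x ⟨v, hv, rfl⟩
    rw [SetLike.mem_coe]
    refine mem_AXm.2 ⟨v, (hvs v (Finset.mem_coe.1 hv)).1, ?_, rfl⟩
    intro e he
    by_cases heF : e ∈ F
    · exact Or.inl heF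
    · refine Or.inr ?_
      rw [hSeq]
      exact ⟨mem_biUnion (Finset.mem_coe.1 hv) he, heF⟩
  -- building a member below any set dominating A(P)
  have hbuild : ∀ S₀ : Set α, S₀ ⊆ P → AXm V F P ≤ AXm V F S₀ →
      ∃ S ∈ Scal, S ⊆ S₀ := by
    intro S₀ hS₀P hS₀A
    haveI : Fintype ↥F := hFfin.fintype
    have hfd : FiniteDimensional k ↥(FunOn F : Submodule k (α → k)) := by
      refine FiniteDimensional.of_injective
        ((LinearMap.funLeft k k (Subtype.val : ↥F → α)).comp (FunOn F).subtype) ?_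
      intro x y hxy
      apply Subtype.ext
      funext e
      by_cases he : e ∈ F
      · exact congrFun hxy ⟨e, he⟩
      · rw [notMem_support.1 (fun hs => he (x.2 hs)), notMem_support.1 (fun hs => he (y.2 hs))]
    haveI : FiniteDimensional k ↥(AXm V F P) :=
      Submodule.finiteDimensional_of_le (AXm_le_funOn)
    obtain ⟨G, hG⟩ : (AXm V F P).FG := (Submodule.fg_iff_finiteDimensional _).2 inferInstance
    have hGmem : ∀ g ∈ G, g ∈ AXm V F S₀ := fun g hg =>
      hS₀A (hG ▸ Submodule.subset_span hg)
    choose! rep hrepV hrepsupp hrepeq using fun g (hg : g ∈ G) => mem_AXm.1 (hGmem g hg)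
    refine ⟨(⋃ v ∈ G.image rep, Function.support v) \ F, ⟨?_, G.image rep, ?_, rfl, ?_⟩, ?_⟩
    · -- ⊆ P
      rintro x ⟨hxU, hxF⟩
      rw [mem_iUnion₂] at hxU
      obtain ⟨v, hv, hxv⟩ := hxU
      obtain ⟨g, hg, rfl⟩ := Finset.mem_image.1 hv
      rcases hrepsupp g hg hxv with h' | h'
      · exact absurd h' hxF
      · exact hS₀P h'
    · -- elements of the family
      intro v hv
      obtain ⟨g, hg, rfl⟩ := Finset.mem_image.1 hv
      exact ⟨hrepV g hg, (hrepsupp g hg).trans (union_subset_union_right F hS₀P)⟩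
    · -- span condition
      rw [← hG]
      refine Submodule.span_le.2 ?_
      intro g hg
      refine Submodule.subset_span ⟨rep g, ?_, hrepeq g (Finset.mem_coe.1 hg)⟩
      exact Finset.mem_coe.2 (Finset.mem_image.2 ⟨g, Finset.mem_coe.1 hg, rfl⟩)
    · -- ⊆ S₀
      rintro x ⟨hxU, hxF⟩
      rw [mem_iUnion₂] at hxU
      obtain ⟨v, hv, hxv⟩ := hxU
      obtain ⟨g, hg, rfl⟩ := Finset.mem_image.1 hv
      rcases hrepsupp g hg hxv with h' | h'
      · exact absurd h' hxF
      · exact h'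
  -- chain condition for Zorn
  have hchain : ∀ c ⊆ Scal, IsChain (· ⊆ ·) c → c.Nonempty →
      ∃ lb ∈ Scal, ∀ s ∈ c, lb ⊆ s := by
    intro c hcS hcchain hcne
    obtain ⟨S1, hS1⟩ := hcne
    have hSωP : ⋂₀ c ⊆ P := (sInter_subset_of_mem hS1).trans (hcS hS1).1
    have hkey : AXm V F P ≤ AXm V F (⋂₀ c) := by
      intro a haP
      have haF : Function.support a ⊆ F := AXm_le_funOn haP
      refine (duality h hF hFfin (hSωP.trans hP) (hFP.mono_right hSωP)).2 a haF ?_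
      intro b hb
      obtain ⟨w, hwW, hws, rfl⟩ := mem_BXm.1 hb
      have hfinS : ∀ S ∈ c, (Function.support w ∩ S).Finite := by
        intro S hS
        obtain ⟨-, vs, hvs, hSeq, -⟩ := hcS hS
        have hsub : Function.support w ∩ S ⊆
            ⋃ v ∈ vs, (Function.support v ∩ Function.support w) := by
          rintro x ⟨hxw, hxS⟩
          rw [hSeq] at hxS
          obtain ⟨hxU, -⟩ := hxS
          rw [mem_iUnion₂] at hxU ⊢
          obtain ⟨v, hv, hxv⟩ := hxU
          exact ⟨v, hv, hxv, hxw⟩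
        refine Set.Finite.subset ?_ hsub
        refine Set.Finite.biUnion (Finset.finite_toSet vs) ?_
        intro v hv
        exact (h.2.2.1 v (hvs v hv).1 w hwW).1
      obtain ⟨S₁, hS₁c, hgS₁⟩ : ∃ S₁ ∈ c,
          (Function.support w ∩ S₁).ncard
            = sInf ((fun S => (Function.support w ∩ S).ncard) '' c) := by
        have hne : ((fun S => (Function.support w ∩ S).ncard) '' c).Nonempty :=
          ⟨_, ⟨S1, hS1, rfl⟩⟩
        obtain ⟨S₁, hS₁, heq⟩ := Nat.sInf_mem hne
        exact ⟨S₁, hS₁, heq⟩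
      have hmin : ∀ S ∈ c, Function.support w ∩ S₁ ⊆ Function.support w ∩ S := by
        intro S hS
        rcases hcchain.total hS₁c hS with hle | hle
        · exact inter_subset_inter_right _ hle
        · have hsub2 : Function.support w ∩ S ⊆ Function.support w ∩ S₁ :=
            inter_subset_inter_right _ hle
          have heq : Function.support w ∩ S = Function.support w ∩ S₁ := by
            refine Set.eq_of_subset_of_ncard_le hsub2 ?_ (hfinS S₁ hS₁c)
            rw [hgS₁]
            exact Nat.sInf_le ⟨S, hS, rfl⟩
          rw [heq]
      have hempty : Function.support w ∩ S₁ = ∅ := by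
        rw [eq_empty_iff_forall_notMem]
        rintro x ⟨hxw, hxS₁⟩
        have hxω : x ∈ ⋂₀ c := by
          rw [mem_sInter]
          intro S hS
          exact (hmin S hS ⟨hxw, hxS₁⟩).2
        exact (hws hxw).2 hxω
      have haS₁ : a ∈ AXm V F S₁ := hAle S₁ (hcS hS₁c) haP
      have hbS₁ : F.indicator w ∈ BXm W E F S₁ := by
        refine mem_BXm.2 ⟨w, hwW, ?_, rfl⟩
        intro x hx
        refine ⟨(hws hx).1, fun hxS₁ => ?_⟩
        rw [eq_empty_iff_forall_notMem] at hempty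
        exact hempty x ⟨hx, hxS₁⟩
      exact phi_AB_zero h haS₁ hbS₁
    obtain ⟨S', hS'mem, hS'sub⟩ := hbuild (⋂₀ c) hSωP hkey
    exact ⟨S', hS'mem, fun s hs => hS'sub.trans (sInter_subset_of_mem hs)⟩
  -- initial member and Zorn
  obtain ⟨S₀, hS₀mem, -⟩ := hbuild P Set.Subset.rfl (le_refl _)
  obtain ⟨Sstar, -, hSmem, hSmin⟩ := zorn_superset_nonempty Scal hchain S₀ hS₀mem
  obtain ⟨hSP, vs, hvs, hSeq, hspan⟩ := hSmem
  have hSmemScal : Sstar ∈ Scal := ⟨hSP, vs, hvs, hSeq, hspan⟩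
  have hAeq : AXm V F Sstar = AXm V F P :=
    le_antisymm (AXm_mono hSP) (hAle Sstar hSmemScal)
  have hindep : PresIndep V Sstar := by
    intro u huV husupp
    by_contra hu0
    obtain ⟨z, hz⟩ : ∃ z, u z ≠ 0 := by
      by_contra hzc
      push_neg at hzc
      exact hu0 (funext fun x => hzc x)
    have hindF : F.indicator u = 0 := by
      funext e
      by_cases heF : e ∈ F
      · rw [indicator_of_mem heF]
        by_contra hne
        exact hFP.le_bot ⟨heF, hSP (husupp hne)⟩
      · exact indicator_of_notMem heF u
    set mu : (α → k) → (α → k) := fun v => v - (v z / u z) • u with hmu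
    have hmuz : ∀ v, mu v z = 0 := by
      intro v
      show v z - (v z / u z) • u z = 0
      rw [smul_eq_mul, div_mul_cancel₀ _ hz, sub_self]
    have hmuind : ∀ v, F.indicator (mu v) = F.indicator v := by
      intro v
      have h1 : F.indicator (mu v) = indLM (k := k) F (v - (v z / u z) • u) := rfl
      rw [h1, map_sub, map_smul, indLM_apply, indLM_apply, hindF, smul_zero, sub_zero]
    have hmusupp : ∀ v, Function.support (mu v) ⊆
        Function.support v ∪ Function.support u := by
      intro v
      refine (support_sub_subset v _).trans (union_subset_union_right _ ?_)
      exact Function.support_smul_subset_right _ u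
    set S' : Set α := (⋃ v ∈ vs.image mu, Function.support v) \ F with hS'
    have hS'subStar : S' ⊆ Sstar := by
      rintro x ⟨hxU, hxF⟩
      rw [mem_iUnion₂] at hxU
      obtain ⟨v, hv, hxv⟩ := hxU
      obtain ⟨v₀, hv₀, rfl⟩ := Finset.mem_image.1 hv
      rcases hmusupp v₀ hxv with h' | h'
      · rw [hSeq]
        exact ⟨mem_biUnion hv₀ h', hxF⟩
      · exact husupp h'
    have hS'mem : S' ∈ Scal := by
      refine ⟨hS'subStar.trans hSP, vs.image mu, ?_, rfl, ?_⟩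
      · intro v hv
        obtain ⟨v₀, hv₀, rfl⟩ := Finset.mem_image.1 hv
        constructor
        · exact Submodule.sub_mem V (hvs v₀ hv₀).1 (Submodule.smul_mem V _ huV)
        · refine (hmusupp v₀).trans ?_
          refine union_subset (hvs v₀ hv₀).2 ?_
          exact fun x hx => Or.inr (hSP (husupp hx))
      · refine hspan.trans (Submodule.span_le.2 ?_)
        rintro x ⟨v, hv, rfl⟩
        refine Submodule.subset_span ⟨mu v, ?_, hmuind v⟩
        exact Finset.mem_coe.2 (Finset.mem_image.2 ⟨v, Finset.mem_coe.1 hv, rfl⟩)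
    have hback : Sstar ⊆ S' := hSmin hS'mem hS'subStar
    have hzS : z ∈ Sstar := husupp hz
    have hzS' : z ∉ S' := by
      rw [hS']
      rintro ⟨hzU, -⟩
      rw [mem_iUnion₂] at hzU
      obtain ⟨v, hv, hzv⟩ := hzU
      obtain ⟨v₀, hv₀, rfl⟩ := Finset.mem_image.1 hv
      exact hzv (hmuz v₀)
    exact hzS' (hback hzS)
  have hBeq : BXm W E F Sstar = BXm W E F P := by
    apply le_antisymm
    · intro b hb
      refine (duality h hF hFfin hP hFP).1 b (BXm_le_funOn hb) ?_
      intro a haP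
      have haS : a ∈ AXm V F Sstar := by rw [hAeq]; exact haP
      exact phi_AB_zero h haS hb
    · exact BXm_antimono hSP
  exact ⟨Sstar, hSP, hindep, hAeq, hBeq⟩

end Main

section Final

variable {α k : Type*} [Field k]

lemma ind_eq {F Q E : Set α} (hF : F ⊆ E) (hFQ : Disjoint F Q) {v : α → k}
    (hvFQ : Function.support v ⊆ F ∪ Q) :
    (E \ Q).indicator v = F.indicator v := by
  funext e
  by_cases heF : e ∈ F
  · have hmem : e ∈ E \ Q := ⟨hF heF, fun hQ => hFQ.le_bot ⟨heF, hQ⟩⟩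
    rw [indicator_of_mem heF, indicator_of_mem hmem]
  · rw [indicator_of_notMem heF]
    by_cases heEQ : e ∈ E \ Q
    · rw [indicator_of_mem heEQ]
      by_contra hne
      rcases hvFQ hne with h' | h'
      · exact heF h'
      · exact heEQ.2 h'
    · rw [indicator_of_notMem heEQ]

lemma resComp_eq {E F Q : Set α} {V : Submodule k (α → k)} (hV : V ≤ FunOn E)
    (hF : F ⊆ E) (hFQ : Disjoint F Q) :
    conV V (E \ Q) ⊓ FunOn F = AXm V F Q := by
  ext x
  rw [Submodule.mem_inf]
  constructor
  · rintro ⟨⟨v, hvV, rfl⟩, hsup⟩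
    have hsup' : Function.support ((E \ Q).indicator v) ⊆ F := hsup
    have hvE : Function.support v ⊆ E := hV hvV
    have hvFQ : Function.support v ⊆ F ∪ Q := by
      intro e he
      by_cases heQ : e ∈ Q
      · exact Or.inr heQ
      · refine Or.inl (hsup' ?_)
        have hmem : e ∈ E \ Q := ⟨hvE he, heQ⟩
        rw [mem_support, indicator_of_mem hmem]
        exact he
    exact mem_AXm.2 ⟨v, hvV, hvFQ, (ind_eq hF hFQ hvFQ).symm⟩
  · intro hx
    obtain ⟨v, hvV, hvFQ, rfl⟩ := mem_AXm.1 hx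
    exact ⟨⟨v, hvV, ind_eq hF hFQ hvFQ⟩, support_indicator_sub F v⟩

end Final

end St13

end Statement13


/-- Given a presentation `Π` on `E`, a finite `F ⊆ E` and `P ⊆ E`
disjoint from `F`, there is a `Π`-independent `P' ⊆ P` with `(Π/P)↾F = (Π/P')↾F`. -/
theorem exists_indep_contraction_set {α k : Type*} [Field k]
    (E : Set α) (V W : Submodule k (α → k)) (h : IsPresentationOn E V W)
    (F : Set α) (hF : F ⊆ E) (hFfin : F.Finite)
    (P : Set α) (hP : P ⊆ E) (hFP : Disjoint F P) :
    ∃ P' ⊆ P, PresIndep V P' ∧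
      pairRes (pairCon (V, W) (E \ P)) F = pairRes (pairCon (V, W) (E \ P')) F := by
  obtain ⟨P', hP'P, hindep, hA, hB⟩ := St13.main_lemma h hF hFfin hP hFP
  refine ⟨P', hP'P, hindep, ?_⟩
  have hFP' : Disjoint F P' := hFP.mono_right hP'P
  have h1 := St13.resComp_eq (Q := P) h.1 hF hFP
  have h2 := St13.resComp_eq (Q := P') h.1 hF hFP'
  show (conV V (E \ P) ⊓ FunOn F, conV (W ⊓ FunOn (E \ P)) F)
      = (conV V (E \ P') ⊓ FunOn F, conV (W ⊓ FunOn (E \ P')) F)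
  rw [Prod.mk.injEq]
  constructor
  · rw [h1, h2, hA]
  · show St13.BXm W E F P = St13.BXm W E F P'
    rw [hB]
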